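/- Let Θ be the rank-23 lattice U^{⊕3} ⊕ E8(−1)^{⊕2} ⊕ ⟨−2⟩, and let v, w ∈ Θ be primitive nonzero vectors. There exists an isometry φ of Θ (a ℤ-linear automorphism preserving the bilinear form) with φ(v) = w if and only if q(v) = q(w) and div(v) = div(w). -/

import Mathlib

/-- The underlying `ℤ`-module of the rank-23 lattice
`Θ = U³ ⊕ E₈(−1)² ⊕ ⟨−2⟩`: three hyperbolic-plane coordinates, two
`E₈`-coordinates, and one `⟨−2⟩`-coordinate. -/
abbrev Theta : Type := (Fin 3 → Fin 2 → ℤ) × (Fin 2 → Fin 8 → ℤ) × ℤ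

/-- The bilinear form of `Θ = U³ ⊕ E₈(−1)² ⊕ ⟨−2⟩`: block-diagonal with three
hyperbolic planes `U`, two copies of the negative of the `E₈` Cartan matrix,
and one `1×1` block `(−2)`. -/
def bform (x y : Theta) : ℤ :=
  (∑ i : Fin 3, (x.1 i 0 * y.1 i 1 + x.1 i 1 * y.1 i 0)) +
  (∑ j : Fin 2, ∑ a : Fin 8, ∑ b : Fin 8,
    x.2.1 j a * (-(CartanMatrix.E₈ a b)) * y.2.1 j b) +
  (-2) * x.2.2 * y.2.2

/-- A vector of `Θ` is primitive if it is not of the form `k • w` with `w ∈ Θ`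
and `|k| ≥ 2`. -/
def ThetaPrimitive (v : Theta) : Prop :=
  ¬ ∃ (n : ℤ) (w : Theta), 2 ≤ |n| ∧ v = n • w

/-- `IsDiv v d` says that the nonnegative integer `d` generates the ideal
`{(v,w) : w ∈ Θ} ⊆ ℤ`, i.e. `d` is the divisibility `div(v)`. -/
def IsDiv (v : Theta) (d : ℕ) : Prop :=
  (∀ w : Theta, (d : ℤ) ∣ bform v w) ∧
  ∀ e : ℤ, (∀ w : Theta, e ∣ bform v w) → e ∣ (d : ℤ)

namespace ThetaW

lemma E8_symm : ∀ a b : Fin 8, CartanMatrix.E₈ a b = CartanMatrix.E₈ b a := by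
  intro a b; fin_cases a <;> fin_cases b <;> rfl

lemma bform_symm (x y : Theta) : bform x y = bform y x := by
  unfold bform
  have h1 : (∑ i : Fin 3, (x.1 i 0 * y.1 i 1 + x.1 i 1 * y.1 i 0))
      = ∑ i : Fin 3, (y.1 i 0 * x.1 i 1 + y.1 i 1 * x.1 i 0) := by
    apply Finset.sum_congr rfl; intro i _; ring
  have h2 : (∑ j : Fin 2, ∑ a : Fin 8, ∑ b : Fin 8,
        x.2.1 j a * (-(CartanMatrix.E₈ a b)) * y.2.1 j b)
      = ∑ j : Fin 2, ∑ a : Fin 8, ∑ b : Fin 8,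
        y.2.1 j a * (-(CartanMatrix.E₈ a b)) * x.2.1 j b := by
    apply Finset.sum_congr rfl; intro j _
    rw [Finset.sum_comm]
    apply Finset.sum_congr rfl; intro a _
    apply Finset.sum_congr rfl; intro b _
    rw [E8_symm b a]; ring
  rw [h1, h2]; ring

lemma bform_add_left (x x' y : Theta) : bform (x + x') y = bform x y + bform x' y := by
  unfold bform
  simp only [Prod.fst_add, Prod.snd_add, Pi.add_apply]
  have h1 : (∑ i : Fin 3, ((x.1 i 0 + x'.1 i 0) * y.1 i 1 + (x.1 i 1 + x'.1 i 1) * y.1 i 0))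
      = (∑ i : Fin 3, (x.1 i 0 * y.1 i 1 + x.1 i 1 * y.1 i 0))
        + (∑ i : Fin 3, (x'.1 i 0 * y.1 i 1 + x'.1 i 1 * y.1 i 0)) := by
    rw [← Finset.sum_add_distrib]
    apply Finset.sum_congr rfl; intro i _; ring
  have h2 : (∑ j : Fin 2, ∑ a : Fin 8, ∑ b : Fin 8,
        (x.2.1 j a + x'.2.1 j a) * (-(CartanMatrix.E₈ a b)) * y.2.1 j b)
      = (∑ j : Fin 2, ∑ a : Fin 8, ∑ b : Fin 8,
          x.2.1 j a * (-(CartanMatrix.E₈ a b)) * y.2.1 j b)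
        + (∑ j : Fin 2, ∑ a : Fin 8, ∑ b : Fin 8,
          x'.2.1 j a * (-(CartanMatrix.E₈ a b)) * y.2.1 j b) := by
    rw [← Finset.sum_add_distrib]
    apply Finset.sum_congr rfl; intro j _
    rw [← Finset.sum_add_distrib]
    apply Finset.sum_congr rfl; intro a _
    rw [← Finset.sum_add_distrib]
    apply Finset.sum_congr rfl; intro b _; ring
  rw [h1, h2]; ring

lemma bform_smul_left (k : ℤ) (x y : Theta) : bform (k • x) y = k * bform x y := by
  unfold bform
  simp only [Prod.smul_fst, Prod.smul_snd, Pi.smul_apply, smul_eq_mul]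
  have h1 : (∑ i : Fin 3, (k * x.1 i 0 * y.1 i 1 + k * x.1 i 1 * y.1 i 0))
      = k * (∑ i : Fin 3, (x.1 i 0 * y.1 i 1 + x.1 i 1 * y.1 i 0)) := by
    rw [Finset.mul_sum]
    apply Finset.sum_congr rfl; intro i _; ring
  have h2 : (∑ j : Fin 2, ∑ a : Fin 8, ∑ b : Fin 8,
        k * x.2.1 j a * (-(CartanMatrix.E₈ a b)) * y.2.1 j b)
      = k * (∑ j : Fin 2, ∑ a : Fin 8, ∑ b : Fin 8,
          x.2.1 j a * (-(CartanMatrix.E₈ a b)) * y.2.1 j b) := by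
    rw [Finset.mul_sum]
    apply Finset.sum_congr rfl; intro j _
    rw [Finset.mul_sum]
    apply Finset.sum_congr rfl; intro a _
    rw [Finset.mul_sum]
    apply Finset.sum_congr rfl; intro b _; ring
  rw [h1, h2]; ring

lemma bform_add_right (x y y' : Theta) : bform x (y + y') = bform x y + bform x y' := by
  rw [bform_symm, bform_add_left, bform_symm y x, bform_symm y' x]

lemma bform_smul_right (k : ℤ) (x y : Theta) : bform x (k • y) = k * bform x y := by
  rw [bform_symm, bform_smul_left, bform_symm]

lemma bform_neg_right (x y : Theta) : bform x (-y) = - bform x y := by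
  have := bform_smul_right (-1) x y
  rw [neg_one_smul] at this; rw [this]; ring

lemma bform_sub_left (x x' y : Theta) : bform (x - x') y = bform x y - bform x' y := by
  have h1 : x - x' = x + (-1 : ℤ) • x' := by module
  rw [h1, bform_add_left, bform_smul_left]; ring

lemma bform_sub_right (x y y' : Theta) : bform x (y - y') = bform x y - bform x y' := by
  rw [bform_symm, bform_sub_left, bform_symm y x, bform_symm y' x]



/-- `Eqv v w` : there is an isometry of `Θ` carrying `v` to `w`. -/
def Eqv (v w : Theta) : Prop :=
  ∃ φ : Theta ≃ₗ[ℤ] Theta, (∀ x y : Theta, bform (φ x) (φ y) = bform x y) ∧ φ v = w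

lemma Eqv.refl (v : Theta) : Eqv v v := ⟨LinearEquiv.refl ℤ Theta, fun _ _ => rfl, rfl⟩

lemma Eqv.symm {v w : Theta} (h : Eqv v w) : Eqv w v := by
  obtain ⟨φ, hiso, hv⟩ := h
  refine ⟨φ.symm, fun x y => ?_, by rw [← hv, LinearEquiv.symm_apply_apply]⟩
  conv_rhs => rw [← φ.apply_symm_apply x, ← φ.apply_symm_apply y]
  rw [hiso]

lemma Eqv.trans {u v w : Theta} (h1 : Eqv u v) (h2 : Eqv v w) : Eqv u w := by
  obtain ⟨φ, hiso, hv⟩ := h1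
  obtain ⟨ψ, hiso2, hw⟩ := h2
  exact ⟨φ.trans ψ, fun x y => by simp [LinearEquiv.trans_apply, hiso2, hiso],
    by simp [LinearEquiv.trans_apply, hv, hw]⟩

/-- Eichler transvection map. -/
def tmap (e x : Theta) (c : ℤ) (v : Theta) : Theta :=
  v + (bform v x) • e - (bform v e) • x - (c * bform v e) • e

lemma tmap_comp (e x : Theta) (c : ℤ)
    (hee : bform e e = 0) (hex : bform e x = 0) (hxe : bform x e = 0)
    (hxx : bform x x = 2 * c) (v : Theta) :
    tmap e (-x) c (tmap e x c v) = v := by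
  unfold tmap
  simp only [bform_add_left, bform_sub_left, bform_smul_left, bform_neg_right,
    hee, hex, hxe, hxx, mul_zero, zero_mul, mul_neg, neg_zero, add_zero, sub_zero,
    neg_neg, zero_smul, smul_neg, sub_neg_eq_add]
  module

lemma tmap_isom (e x : Theta) (c : ℤ)
    (hee : bform e e = 0) (hex : bform e x = 0) (hxe : bform x e = 0)
    (hxx : bform x x = 2 * c) (v w : Theta) :
    bform (tmap e x c v) (tmap e x c w) = bform v w := by
  unfold tmap
  simp only [bform_add_left, bform_sub_left, bform_smul_left,
    bform_add_right, bform_sub_right, bform_smul_right,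
    hee, hex, hxe, hxx]
  rw [show bform e w = bform w e from bform_symm _ _,
      show bform x w = bform w x from bform_symm _ _]
  ring

lemma tmap_add (e x : Theta) (c : ℤ) (a b : Theta) :
    tmap e x c (a + b) = tmap e x c a + tmap e x c b := by
  unfold tmap
  rw [bform_add_left, bform_add_left]
  module

lemma tmap_smul (e x : Theta) (c : ℤ) (k : ℤ) (a : Theta) :
    tmap e x c (k • a) = k • tmap e x c a := by
  unfold tmap
  rw [bform_smul_left, bform_smul_left]
  module

/-- The transvection as an isometry: `Eqv v (tmap e x c v)`. -/
lemma teqv (e x : Theta) (c : ℤ)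
    (hee : bform e e = 0) (hex : bform e x = 0) (hxx : bform x x = 2 * c)
    (v : Theta) : Eqv v (tmap e x c v) := by
  have hxe : bform x e = 0 := by rw [bform_symm]; exact hex
  have hex' : bform e (-x) = 0 := by rw [bform_neg_right, hex, neg_zero]
  have hxe' : bform (-x) e = 0 := by rw [bform_symm, hex']
  have hxx' : bform (-x) (-x) = 2 * c := by
    rw [bform_neg_right, bform_symm, bform_neg_right, bform_symm, neg_neg, hxx]
  refine ⟨{ toFun := tmap e x c
            invFun := tmap e (-x) c
            map_add' := tmap_add e x c
            map_smul' := tmap_smul e x c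
            left_inv := tmap_comp e x c hee hex hxe hxx
            right_inv := fun a => by
              have := tmap_comp e (-x) c hee hex' hxe' hxx' a
              rwa [neg_neg] at this }, ?_, rfl⟩
  intro a b
  exact tmap_isom e x c hee hex hxe hxx a b


/-! ### Small vectors -/

def uvec (i : Fin 3) (j : Fin 2) (k : ℤ) : Theta :=
  (fun i' j' => if i' = i ∧ j' = j then k else 0, 0, 0)

def mvec (j : Fin 2) (a : Fin 8) (k : ℤ) : Theta :=
  (0, fun j' a' => if j' = j ∧ a' = a then k else 0, 0)

def svec (k : ℤ) : Theta := (0, 0, k)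

/-- pairing of `v` with the `a`-th basis vector of the `j`-th `E₈(-1)` block,
up to sign:  `bform v (mvec j a 1) = - pairE8 v j a`. -/
def pairE8 (v : Theta) (j : Fin 2) (a : Fin 8) : ℤ :=
  ∑ a' : Fin 8, v.2.1 j a' * CartanMatrix.E₈ a' a

lemma bform_uvec (v : Theta) (i : Fin 3) (j : Fin 2) (k : ℤ) :
    bform v (uvec i j k) = k * v.1 i (if j = 0 then 1 else 0) := by
  unfold bform uvec
  fin_cases i <;> fin_cases j <;>
    simp [Fin.sum_univ_three, Fin.sum_univ_succ] <;> ring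

lemma bform_svec (v : Theta) (k : ℤ) : bform v (svec k) = -2 * v.2.2 * k := by
  unfold bform svec
  simp

lemma bform_mvec (v : Theta) (j : Fin 2) (a : Fin 8) (k : ℤ) :
    bform v (mvec j a k) = -(k * pairE8 v j a) := by
  unfold bform mvec pairE8
  simp only [Pi.zero_apply, mul_zero, zero_mul, Finset.sum_const_zero, add_zero, zero_add]
  have h : ∀ j' : Fin 2, (∑ a' : Fin 8, ∑ b : Fin 8,
      v.2.1 j' a' * (-(CartanMatrix.E₈ a' b)) * (if j' = j ∧ b = a then k else 0))
      = if j' = j then -(k * ∑ a' : Fin 8, v.2.1 j' a' * CartanMatrix.E₈ a' a) else 0 := by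
    intro j'
    by_cases hj : j' = j
    · rw [hj]
      simp only [true_and, if_true]
      have h2 : ∀ a' : Fin 8, (∑ b : Fin 8,
          v.2.1 j a' * (-(CartanMatrix.E₈ a' b)) * (if b = a then k else 0))
          = -(k * (v.2.1 j a' * CartanMatrix.E₈ a' a)) := by
        intro a'
        rw [Finset.sum_eq_single a]
        · simp only [if_true]; ring
        · intro b _ hb; simp [hb]
        · simp
      rw [Finset.sum_congr rfl fun a' _ => h2 a', Finset.sum_neg_distrib, ← Finset.mul_sum]
    · simp only [hj, false_and, if_false, mul_zero, Finset.sum_const_zero]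
  rw [Finset.sum_congr rfl (fun j' _ => h j'), Finset.sum_ite_eq' Finset.univ j
    (fun j' => -(k * ∑ a' : Fin 8, v.2.1 j' a' * CartanMatrix.E₈ a' a))]
  simp


/-! ### Coordinates of transvections -/

lemma tmap_c1 (e x : Theta) (c : ℤ) (v : Theta) (i : Fin 3) (j : Fin 2) :
    (tmap e x c v).1 i j
      = v.1 i j + bform v x * e.1 i j - bform v e * x.1 i j - c * bform v e * e.1 i j := by
  simp [tmap, Prod.fst_add, Prod.fst_sub, Pi.add_apply, Pi.sub_apply, Pi.smul_apply,
    smul_eq_mul, mul_assoc]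

lemma tmap_c2 (e x : Theta) (c : ℤ) (v : Theta) (j : Fin 2) (a : Fin 8) :
    (tmap e x c v).2.1 j a
      = v.2.1 j a + bform v x * e.2.1 j a - bform v e * x.2.1 j a
        - c * bform v e * e.2.1 j a := by
  simp [tmap, Prod.snd_add, Prod.snd_sub, Prod.fst_add, Prod.fst_sub,
    Pi.add_apply, Pi.sub_apply, Pi.smul_apply, smul_eq_mul, mul_assoc]

lemma tmap_c3 (e x : Theta) (c : ℤ) (v : Theta) :
    (tmap e x c v).2.2
      = v.2.2 + bform v x * e.2.2 - bform v e * x.2.2 - c * bform v e * e.2.2 := by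
  simp [tmap, Prod.snd_add, Prod.snd_sub, smul_eq_mul, mul_assoc]

lemma uvec_c1 (i : Fin 3) (j : Fin 2) (k : ℤ) (i' : Fin 3) (j' : Fin 2) :
    (uvec i j k).1 i' j' = if i' = i ∧ j' = j then k else 0 := rfl

@[simp] lemma uvec_c2 (i : Fin 3) (j : Fin 2) (k : ℤ) : (uvec i j k).2.1 = 0 := rfl
@[simp] lemma uvec_c3 (i : Fin 3) (j : Fin 2) (k : ℤ) : (uvec i j k).2.2 = 0 := rfl
@[simp] lemma mvec_c1 (j : Fin 2) (a : Fin 8) (k : ℤ) : (mvec j a k).1 = 0 := rfl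
lemma mvec_c2 (j : Fin 2) (a : Fin 8) (k : ℤ) (j' : Fin 2) (a' : Fin 8) :
    (mvec j a k).2.1 j' a' = if j' = j ∧ a' = a then k else 0 := rfl
@[simp] lemma mvec_c3 (j : Fin 2) (a : Fin 8) (k : ℤ) : (mvec j a k).2.2 = 0 := rfl
@[simp] lemma svec_c1 (k : ℤ) : (svec k).1 = 0 := rfl
@[simp] lemma svec_c2 (k : ℤ) : (svec k).2.1 = 0 := rfl
@[simp] lemma svec_c3 (k : ℤ) : (svec k).2.2 = k := rfl

def flip (j : Fin 2) : Fin 2 := if j = 0 then 1 else 0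

lemma flip_ne (j : Fin 2) : flip j ≠ j := by fin_cases j <;> decide

lemma bform_uvec' (v : Theta) (i : Fin 3) (j : Fin 2) (k : ℤ) :
    bform v (uvec i j k) = k * v.1 i (flip j) := bform_uvec v i j k

lemma pairE8_uvec (i : Fin 3) (j : Fin 2) (k : ℤ) (j' : Fin 2) (a : Fin 8) :
    pairE8 (uvec i j k) j' a = 0 := by
  simp [pairE8, uvec]

lemma pairE8_mvec (j : Fin 2) (a : Fin 8) (k : ℤ) (j' : Fin 2) (a' : Fin 8) :
    pairE8 (mvec j a k) j' a'
      = if j' = j then k * CartanMatrix.E₈ a a' else 0 := by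
  unfold pairE8 mvec
  by_cases hj : j' = j
  · simp only [hj, if_true, true_and]
    rw [Finset.sum_eq_single a]
    · simp
    · intro b _ hb; simp [hb]
    · simp
  · simp [hj]

lemma pairE8_svec (k : ℤ) (j : Fin 2) (a : Fin 8) : pairE8 (svec k) j a = 0 := by
  simp [pairE8, svec]

lemma E8_diag : ∀ a : Fin 8, CartanMatrix.E₈ a a = 2 := by decide

/-! ### U-block moves -/

/-- Transvection `E(uvec i j 1, uvec i' j' k)` for `i ≠ i'`:
adds `k * v.1 i' (flip j')` to coordinate `(i,j)` and subtracts
`k * v.1 i (flip j)` from coordinate `(i',j')`. -/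
lemma umove (i i' : Fin 3) (hii : i ≠ i') (j j' : Fin 2) (k : ℤ) (v : Theta) :
    ∃ v', Eqv v v' ∧
      v'.1 i j = v.1 i j + k * v.1 i' (flip j') ∧
      v'.1 i' j' = v.1 i' j' - k * v.1 i (flip j) ∧
      (∀ (i₀ : Fin 3) (j₀ : Fin 2), ¬(i₀ = i ∧ j₀ = j) → ¬(i₀ = i' ∧ j₀ = j') →
        v'.1 i₀ j₀ = v.1 i₀ j₀) ∧
      v'.2 = v.2 := by
  have hee : bform (uvec i j 1) (uvec i j 1) = 0 := by
    rw [bform_uvec', uvec_c1]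
    simp [flip_ne j]
  have hex : bform (uvec i j 1) (uvec i' j' k) = 0 := by
    rw [bform_uvec', uvec_c1]
    simp [hii.symm]
  have hxx : bform (uvec i' j' k) (uvec i' j' k) = 2 * 0 := by
    rw [bform_uvec', uvec_c1]
    simp [flip_ne j']
  refine ⟨_, teqv (uvec i j 1) (uvec i' j' k) 0 hee hex hxx v, ?_, ?_, ?_, ?_⟩
  · rw [tmap_c1, uvec_c1, uvec_c1, bform_uvec', bform_uvec']
    have h1 : i = i ∧ j = j := ⟨rfl, rfl⟩
    have h2 : ¬(i = i' ∧ j = j') := fun h => hii h.1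
    simp only [if_neg h2, eq_self_iff_true, and_self, if_true, mul_one]
    ring
  · rw [tmap_c1, uvec_c1, uvec_c1, bform_uvec', bform_uvec']
    have h3 : ¬(i' = i ∧ j' = j) := fun h => hii h.1.symm
    have h4 : i' = i' ∧ j' = j' := ⟨rfl, rfl⟩
    simp only [if_neg h3, eq_self_iff_true, and_self, if_true, mul_one]
    ring
  · intro i₀ j₀ h1 h2
    rw [tmap_c1, uvec_c1, uvec_c1]
    simp [h1, h2]
  · ext <;> simp [tmap_c2, tmap_c3]


/-- Transvection `E(uvec i j 1, mvec j₂ a k)`. -/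
lemma mmove (i : Fin 3) (j : Fin 2) (j₂ : Fin 2) (a : Fin 8) (k : ℤ) (v : Theta) :
    ∃ v', Eqv v v' ∧
      v'.1 i j = v.1 i j - k * pairE8 v j₂ a + k ^ 2 * v.1 i (flip j) ∧
      (∀ (i₀ : Fin 3) (j₀ : Fin 2), ¬(i₀ = i ∧ j₀ = j) → v'.1 i₀ j₀ = v.1 i₀ j₀) ∧
      (∀ (j₀ : Fin 2) (a₀ : Fin 8), v'.2.1 j₀ a₀
        = v.2.1 j₀ a₀ - (if j₀ = j₂ ∧ a₀ = a then k * v.1 i (flip j) else 0)) ∧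
      v'.2.2 = v.2.2 := by
  have hee : bform (uvec i j 1) (uvec i j 1) = 0 := by
    rw [bform_uvec', uvec_c1]; simp [flip_ne j]
  have hex : bform (uvec i j 1) (mvec j₂ a k) = 0 := by
    rw [bform_mvec, pairE8_uvec]; ring
  have hxx : bform (mvec j₂ a k) (mvec j₂ a k) = 2 * (-k ^ 2) := by
    rw [bform_mvec, pairE8_mvec]
    simp [E8_diag a]; ring
  refine ⟨_, teqv (uvec i j 1) (mvec j₂ a k) (-k ^ 2) hee hex hxx v, ?_, ?_, ?_, ?_⟩
  · rw [tmap_c1, uvec_c1, bform_mvec, bform_uvec']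
    have h1 : i = i ∧ j = j := ⟨rfl, rfl⟩
    simp only [mvec_c1, Pi.zero_apply, eq_self_iff_true, and_self, if_true, mul_one, mul_zero]
    ring
  · intro i₀ j₀ h1
    rw [tmap_c1, uvec_c1]
    simp [h1]
  · intro j₀ a₀
    rw [tmap_c2, mvec_c2, bform_uvec']
    by_cases h : j₀ = j₂ ∧ a₀ = a
    · simp only [if_pos h, uvec_c2, Pi.zero_apply, mul_zero, sub_zero]; ring
    · simp only [if_neg h, uvec_c2, Pi.zero_apply, mul_zero, sub_zero]; ring
  · rw [tmap_c3, uvec_c3, mvec_c3]; ring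

/-- Transvection `E(uvec i j 1, svec k)`. -/
lemma smove (i : Fin 3) (j : Fin 2) (k : ℤ) (v : Theta) :
    ∃ v', Eqv v v' ∧
      v'.1 i j = v.1 i j - 2 * k * v.2.2 + k ^ 2 * v.1 i (flip j) ∧
      (∀ (i₀ : Fin 3) (j₀ : Fin 2), ¬(i₀ = i ∧ j₀ = j) → v'.1 i₀ j₀ = v.1 i₀ j₀) ∧
      v'.2.1 = v.2.1 ∧
      v'.2.2 = v.2.2 - k * v.1 i (flip j) := by
  have hee : bform (uvec i j 1) (uvec i j 1) = 0 := by
    rw [bform_uvec', uvec_c1]; simp [flip_ne j]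
  have hex : bform (uvec i j 1) (svec k) = 0 := by
    rw [bform_svec]; simp
  have hxx : bform (svec k) (svec k) = 2 * (-k ^ 2) := by
    rw [bform_svec]; simp; ring
  refine ⟨_, teqv (uvec i j 1) (svec k) (-k ^ 2) hee hex hxx v, ?_, ?_, ?_, ?_⟩
  · rw [tmap_c1, uvec_c1, bform_svec, bform_uvec']
    simp only [svec_c1, Pi.zero_apply, eq_self_iff_true, and_self, if_true, mul_one, mul_zero]
    ring
  · intro i₀ j₀ h1
    rw [tmap_c1, uvec_c1]
    simp [h1]
  · ext j₀ a₀
    rw [tmap_c2, uvec_c2]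
    simp
  · rw [tmap_c3, uvec_c3, svec_c3, bform_svec, bform_uvec']
    ring

/-- Sign change on the first hyperbolic block. -/
lemma negmove (v : Theta) :
    ∃ v', Eqv v v' ∧ (∀ j : Fin 2, v'.1 0 j = -(v.1 0 j)) ∧
      (∀ (i₀ : Fin 3) (j₀ : Fin 2), i₀ ≠ 0 → v'.1 i₀ j₀ = v.1 i₀ j₀) ∧
      v'.2 = v.2 := by
  classical
  let f : Theta → Theta := fun w => (fun i j => if i = 0 then -(w.1 i j) else w.1 i j, w.2)
  have hf : ∀ x y : Theta, bform (f x) (f y) = bform x y := by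
    intro x y
    unfold bform
    simp only [f, Fin.sum_univ_three]
    norm_num [show (1:Fin 3) ≠ 0 by decide, show (2:Fin 3) ≠ 0 by decide]
    try ring
  have hinv : ∀ w, f (f w) = w := by
    intro w
    unfold f
    refine Prod.ext ?_ rfl
    funext i j
    by_cases h : i = 0 <;> simp [h]
  refine ⟨f v, ⟨{ toFun := f
                  invFun := f
                  map_add' := fun a b => by
                    unfold f
                    refine Prod.ext ?_ rfl
                    funext i j
                    by_cases h : i = 0 <;> simp [h] <;> ring
                  map_smul' := fun m a => by
                    unfold f
                    refine Prod.ext ?_ rfl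
                    funext i j
                    by_cases h : i = 0 <;> simp [h] <;> ring
                  left_inv := hinv
                  right_inv := hinv }, hf, rfl⟩, ?_, ?_, rfl⟩
  · intro j; simp [f]
  · intro i₀ j₀ h; simp [f, h]


/-! ### Expansion of the form and divisibility bridge -/

lemma flip_flip (j : Fin 2) : flip (flip j) = j := by fin_cases j <;> decide

lemma bform_expand (v w : Theta) :
    bform v w = (∑ i : Fin 3, (v.1 i 0 * w.1 i 1 + v.1 i 1 * w.1 i 0))
      + (∑ j : Fin 2, ∑ b : Fin 8, -(pairE8 v j b * w.2.1 j b))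
      + (2 * v.2.2) * (-(w.2.2)) := by
  unfold bform
  have h2 : (∑ j : Fin 2, ∑ a : Fin 8, ∑ b : Fin 8,
      v.2.1 j a * (-(CartanMatrix.E₈ a b)) * w.2.1 j b)
      = ∑ j : Fin 2, ∑ b : Fin 8, -(pairE8 v j b * w.2.1 j b) := by
    apply Finset.sum_congr rfl; intro j _
    rw [Finset.sum_comm]
    apply Finset.sum_congr rfl; intro b _
    unfold pairE8
    rw [Finset.sum_mul, ← Finset.sum_neg_distrib]
    apply Finset.sum_congr rfl; intro a _
    ring
  rw [h2]; ring

lemma dvd_bform_of_dvd_coords {e : ℤ} {v : Theta}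
    (h1 : ∀ i j, e ∣ v.1 i j) (h2 : ∀ j a, e ∣ pairE8 v j a)
    (h3 : e ∣ 2 * v.2.2) (w : Theta) : e ∣ bform v w := by
  rw [bform_expand]
  apply dvd_add
  apply dvd_add
  · apply Finset.dvd_sum; intro i _
    exact dvd_add (dvd_mul_of_dvd_left (h1 i 0) _) (dvd_mul_of_dvd_left (h1 i 1) _)
  · apply Finset.dvd_sum; intro j _
    apply Finset.dvd_sum; intro b _
    exact dvd_neg.mpr (dvd_mul_of_dvd_left (h2 j b) _)
  · exact dvd_mul_of_dvd_left h3 _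

lemma dvd_coords_of_dvd_bform {e : ℤ} {v : Theta}
    (h : ∀ w : Theta, e ∣ bform v w) :
    (∀ i j, e ∣ v.1 i j) ∧ (∀ j a, e ∣ pairE8 v j a) ∧ e ∣ 2 * v.2.2 := by
  refine ⟨fun i j => ?_, fun j a => ?_, ?_⟩
  · have := h (uvec i (flip j) 1)
    rw [bform_uvec', flip_flip, one_mul] at this
    exact this
  · have := h (mvec j a 1)
    rw [bform_mvec, one_mul] at this
    exact (dvd_neg).mp this
  · have := h (svec 1)
    rw [bform_svec] at this
    have h2 : -2 * v.2.2 * 1 = -(2 * v.2.2) := by ring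
    rw [h2] at this
    exact (dvd_neg).mp this

/-- Integral inverse of the `E₈` Cartan matrix. -/
def CE8inv : Matrix (Fin 8) (Fin 8) ℤ :=
  !![4, 5, 7, 10, 8, 6, 4, 2;
     5, 8, 10, 15, 12, 9, 6, 3;
     7, 10, 14, 20, 16, 12, 8, 4;
     10, 15, 20, 30, 24, 18, 12, 6;
     8, 12, 16, 24, 20, 15, 10, 5;
     6, 9, 12, 18, 15, 12, 8, 4;
     4, 6, 8, 12, 10, 8, 6, 3;
     2, 3, 4, 6, 5, 4, 3, 2]

lemma CmulInv : ∀ a c : Fin 8,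
    (∑ b : Fin 8, CartanMatrix.E₈ a b * CE8inv b c) = if a = c then 1 else 0 := by
  decide

lemma entry_eq_sum_pair (v : Theta) (j : Fin 2) (a : Fin 8) :
    v.2.1 j a = ∑ c : Fin 8, pairE8 v j c * CE8inv c a := by
  unfold pairE8
  rw [Finset.sum_congr rfl (fun c _ => Finset.sum_mul Finset.univ
    (fun a' => v.2.1 j a' * CartanMatrix.E₈ a' c) (CE8inv c a))]
  rw [Finset.sum_comm]
  rw [Finset.sum_congr rfl (fun a' _ => Finset.sum_congr rfl
    (fun c _ => mul_assoc (v.2.1 j a') (CartanMatrix.E₈ a' c) (CE8inv c a)))]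
  rw [Finset.sum_congr rfl (fun a' _ => (Finset.mul_sum Finset.univ
    (fun c => CartanMatrix.E₈ a' c * CE8inv c a) (v.2.1 j a')).symm)]
  rw [Finset.sum_congr rfl (fun a' _ => by rw [CmulInv a' a])]
  rw [Finset.sum_congr rfl (fun a' (_ : a' ∈ Finset.univ) =>
    mul_ite (a' = a) (v.2.1 j a') (1:ℤ) 0)]
  simp

lemma dvd_entry_of_dvd_pair {e : ℤ} {v : Theta} {j : Fin 2}
    (h : ∀ a, e ∣ pairE8 v j a) (a : Fin 8) : e ∣ v.2.1 j a := by
  rw [entry_eq_sum_pair v j a]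
  apply Finset.dvd_sum; intro c _
  exact dvd_mul_of_dvd_left (h c) _


@[simp] lemma flip_zero : flip 0 = 1 := rfl
@[simp] lemma flip_one : flip 1 = 0 := rfl

lemma natAbs_lt_of_emod {a b : ℤ} (hb : b ≠ 0) : (a % b).natAbs < b.natAbs := by
  have h1 : 0 ≤ a % b := Int.emod_nonneg a hb
  have h2 : a % b < |b| := Int.emod_lt_abs a hb
  have := Int.natAbs_lt_natAbs_of_nonneg_of_lt h1 h2
  rwa [Int.natAbs_abs] at this

/-- Phase 1: kill coordinate `(1,1)` (i.e. `b₂`) using Euclid against `a₁`,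
preserving the third block and the `E₈`/`⟨-2⟩` parts. -/
lemma phase1 (v : Theta) :
    ∃ v', Eqv v v' ∧ v'.1 1 1 = 0 ∧ v'.1 2 = v.1 2 ∧ v'.2 = v.2 := by
  suffices H : ∀ n : ℕ, ∀ v : Theta, (v.1 0 0).natAbs ≤ n →
      ∃ v', Eqv v v' ∧ v'.1 1 1 = 0 ∧ v'.1 2 = v.1 2 ∧ v'.2 = v.2 from
    H _ v le_rfl
  intro n
  induction n using Nat.strong_induction_on with
  | _ n ih =>
    intro v hn
    by_cases hb : v.1 1 1 = 0
    · exact ⟨v, Eqv.refl v, hb, rfl, rfl⟩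
    by_cases ha : v.1 0 0 = 0
    · obtain ⟨v1, E1, c1a, c1b, c1rest, c1s⟩ := umove 0 1 (by decide) 0 0 1 v
      obtain ⟨v2, E2, c2a, c2b, c2rest, c2s⟩ := umove 1 0 (by decide) 1 1 (-1) v1
      refine ⟨v2, E1.trans E2, ?_, ?_, ?_⟩
      · rw [c2a, flip_one, c1rest 1 1 (by decide) (by decide), c1a, flip_zero, ha]
        ring
      · funext j₀
        rw [c2rest 2 j₀ (by intro h; exact absurd h.1 (by decide)) (by intro h; exact absurd h.1 (by decide)), c1rest 2 j₀ (by intro h; exact absurd h.1 (by decide)) (by intro h; exact absurd h.1 (by decide))]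
      · rw [c2s, c1s]
    · obtain ⟨v1, E1, c1a, c1b, c1rest, c1s⟩ :=
        umove 1 0 (by decide) 1 1 (-(v.1 1 1 / v.1 0 0)) v
      have hv1b : v1.1 1 1 = v.1 1 1 % v.1 0 0 := by
        rw [c1a, flip_one, Int.emod_def]; ring
      have hv1a : v1.1 0 0 = v.1 0 0 := c1rest 0 0 (by decide) (by decide)
      by_cases hz : v1.1 1 1 = 0
      · refine ⟨v1, E1, hz, ?_, c1s⟩
        funext j₀
        exact c1rest 2 j₀ (by intro h; exact absurd h.1 (by decide)) (by intro h; exact absurd h.1 (by decide))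
      · obtain ⟨v2, E2, c2a, c2b, c2rest, c2s⟩ :=
          umove 0 1 (by decide) 0 0 (-(v1.1 0 0 / v1.1 1 1)) v1
        have hv2a : v2.1 0 0 = v1.1 0 0 % v1.1 1 1 := by
          rw [c2a, flip_zero, Int.emod_def]; ring
        have hv2b : v2.1 1 1 = v1.1 1 1 := c2rest 1 1 (by decide) (by decide)
        have hm1 : (v1.1 1 1).natAbs < (v.1 0 0).natAbs := by
          rw [hv1b]; exact natAbs_lt_of_emod ha
        have hm2 : (v2.1 0 0).natAbs < n := by
          rw [hv2a]
          calc (v1.1 0 0 % v1.1 1 1).natAbs < (v1.1 1 1).natAbs := natAbs_lt_of_emod hz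
            _ < (v.1 0 0).natAbs := hm1
            _ ≤ n := hn
        obtain ⟨v3, E3, c3a, c3b, c3s⟩ := ih (v2.1 0 0).natAbs hm2 v2 le_rfl
        refine ⟨v3, (E1.trans E2).trans E3, c3a, ?_, ?_⟩
        · rw [c3b]
          funext j₀
          rw [c2rest 2 j₀ (by intro h; exact absurd h.1 (by decide)) (by intro h; exact absurd h.1 (by decide)), c1rest 2 j₀ (by intro h; exact absurd h.1 (by decide)) (by intro h; exact absurd h.1 (by decide))]
        · rw [c3s, c2s, c1s]


/-- Phase 2: kill coordinate `(0,1)` (i.e. `b₁`) using Euclid against `a₃`,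
preserving the second block and the `E₈`/`⟨-2⟩` parts. -/
lemma phase2 (v : Theta) :
    ∃ v', Eqv v v' ∧ v'.1 0 1 = 0 ∧ v'.1 1 = v.1 1 ∧ v'.2 = v.2 := by
  suffices H : ∀ n : ℕ, ∀ v : Theta, (v.1 2 0).natAbs ≤ n →
      ∃ v', Eqv v v' ∧ v'.1 0 1 = 0 ∧ v'.1 1 = v.1 1 ∧ v'.2 = v.2 from
    H _ v le_rfl
  intro n
  induction n using Nat.strong_induction_on with
  | _ n ih =>
    intro v hn
    by_cases hb : v.1 0 1 = 0
    · exact ⟨v, Eqv.refl v, hb, rfl, rfl⟩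
    by_cases ha : v.1 2 0 = 0
    · obtain ⟨v1, E1, c1a, c1b, c1rest, c1s⟩ := umove 2 0 (by decide) 0 0 1 v
      obtain ⟨v2, E2, c2a, c2b, c2rest, c2s⟩ := umove 0 2 (by decide) 1 1 (-1) v1
      refine ⟨v2, E1.trans E2, ?_, ?_, ?_⟩
      · rw [c2a, flip_one, c1rest 0 1 (by decide) (by decide), c1a, flip_zero, ha]
        ring
      · funext j₀
        rw [c2rest 1 j₀ (by intro h; exact absurd h.1 (by decide))
              (by intro h; exact absurd h.1 (by decide)),
            c1rest 1 j₀ (by intro h; exact absurd h.1 (by decide))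
              (by intro h; exact absurd h.1 (by decide))]
      · rw [c2s, c1s]
    · obtain ⟨v1, E1, c1a, c1b, c1rest, c1s⟩ :=
        umove 0 2 (by decide) 1 1 (-(v.1 0 1 / v.1 2 0)) v
      have hv1b : v1.1 0 1 = v.1 0 1 % v.1 2 0 := by
        rw [c1a, flip_one, Int.emod_def]; ring
      by_cases hz : v1.1 0 1 = 0
      · refine ⟨v1, E1, hz, ?_, c1s⟩
        funext j₀
        exact c1rest 1 j₀ (by intro h; exact absurd h.1 (by decide))
          (by intro h; exact absurd h.1 (by decide))
      · obtain ⟨v2, E2, c2a, c2b, c2rest, c2s⟩ :=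
          umove 2 0 (by decide) 0 0 (-(v1.1 2 0 / v1.1 0 1)) v1
        have hv2a : v2.1 2 0 = v1.1 2 0 % v1.1 0 1 := by
          rw [c2a, flip_zero, Int.emod_def]; ring
        have hv1c : v1.1 2 0 = v.1 2 0 := c1rest 2 0 (by decide) (by decide)
        have hm2 : (v2.1 2 0).natAbs < n := by
          rw [hv2a]
          calc (v1.1 2 0 % v1.1 0 1).natAbs < (v1.1 0 1).natAbs := natAbs_lt_of_emod hz
            _ < (v.1 2 0).natAbs := by rw [hv1b]; exact natAbs_lt_of_emod ha
            _ ≤ n := hn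
        obtain ⟨v3, E3, c3a, c3b, c3s⟩ := ih (v2.1 2 0).natAbs hm2 v2 le_rfl
        refine ⟨v3, (E1.trans E2).trans E3, c3a, ?_, ?_⟩
        · rw [c3b]
          funext j₀
          rw [c2rest 1 j₀ (by intro h; exact absurd h.1 (by decide))
                (by intro h; exact absurd h.1 (by decide)),
              c1rest 1 j₀ (by intro h; exact absurd h.1 (by decide))
                (by intro h; exact absurd h.1 (by decide))]
        · rw [c3s, c2s, c1s]

/-- Phase 3: Euclid between `a₁` and `a₂` (with `b₁ = b₂ = 0` maintained):
end with `a₂ = 0` and `a₁` dividing both original values. -/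
lemma phase3 (v : Theta) (hb1 : v.1 0 1 = 0) (hb2 : v.1 1 1 = 0) :
    ∃ v', Eqv v v' ∧ v'.1 1 0 = 0 ∧ v'.1 0 1 = 0 ∧ v'.1 1 1 = 0 ∧
      v'.1 0 0 ∣ v.1 0 0 ∧ v'.1 0 0 ∣ v.1 1 0 ∧ v'.1 2 = v.1 2 ∧ v'.2 = v.2 := by
  suffices H : ∀ n : ℕ, ∀ v : Theta, (v.1 1 0).natAbs ≤ n → v.1 0 1 = 0 → v.1 1 1 = 0 →
      ∃ v', Eqv v v' ∧ v'.1 1 0 = 0 ∧ v'.1 0 1 = 0 ∧ v'.1 1 1 = 0 ∧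
        v'.1 0 0 ∣ v.1 0 0 ∧ v'.1 0 0 ∣ v.1 1 0 ∧ v'.1 2 = v.1 2 ∧ v'.2 = v.2 from
    H _ v le_rfl hb1 hb2
  clear hb1 hb2 v
  intro n
  induction n using Nat.strong_induction_on with
  | _ n ih =>
    intro v hn hb1 hb2
    by_cases ha2 : v.1 1 0 = 0
    · exact ⟨v, Eqv.refl v, ha2, hb1, hb2, dvd_refl _, ha2 ▸ dvd_zero _, rfl, rfl⟩
    -- op1 : a₁ := a₁ % a₂
    obtain ⟨v1, E1, c1a, c1b, c1rest, c1s⟩ :=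
      umove 0 1 (by decide) 0 1 (-(v.1 0 0 / v.1 1 0)) v
    have hv1a : v1.1 0 0 = v.1 0 0 % v.1 1 0 := by
      rw [c1a, flip_one, Int.emod_def]; ring
    have hv1b1 : v1.1 0 1 = 0 := by
      rw [c1rest 0 1 (by decide) (by decide), hb1]
    have hv1b2 : v1.1 1 1 = 0 := by
      rw [c1b, flip_zero, hb1, hb2]; ring
    have hv1a2 : v1.1 1 0 = v.1 1 0 := c1rest 1 0 (by decide) (by decide)
    by_cases hz : v1.1 0 0 = 0
    · -- a₂ ∣ a₁ : transfer the value a₂ into a₁ and kill a₂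
      obtain ⟨v2, E2, c2a, c2b, c2rest, c2s⟩ := umove 0 1 (by decide) 0 1 1 v1
      have hv2a : v2.1 0 0 = v.1 1 0 := by
        rw [c2a, flip_one, hz, hv1a2]; ring
      have hv2b2 : v2.1 1 1 = 0 := by
        rw [c2b, flip_zero, hv1b1, hv1b2]; ring
      have hv2a2 : v2.1 1 0 = v.1 1 0 := by
        rw [c2rest 1 0 (by decide) (by decide), hv1a2]
      have hv2b1 : v2.1 0 1 = 0 := by
        rw [c2rest 0 1 (by decide) (by decide), hv1b1]
      obtain ⟨v3, E3, c3a, c3b, c3rest, c3s⟩ := umove 1 0 (by decide) 0 1 (-1) v2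
      refine ⟨v3, (E1.trans E2).trans E3, ?_, ?_, ?_, ?_, ?_, ?_, ?_⟩
      · rw [c3a, flip_one, hv2a, hv2a2]; ring
      · rw [c3b, flip_zero, hv2b1, hv2b2]; ring
      · rw [c3rest 1 1 (by decide) (by decide), hv2b2]
      · have h30 : v3.1 0 0 = v.1 1 0 := by
          rw [c3rest 0 0 (by decide) (by decide), hv2a]
        rw [h30]
        exact Int.dvd_of_emod_eq_zero (hv1a ▸ hz)
      · have h30 : v3.1 0 0 = v.1 1 0 := by
          rw [c3rest 0 0 (by decide) (by decide), hv2a]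
        rw [h30]
      · funext j₀
        rw [c3rest 2 j₀ (by intro h; exact absurd h.1 (by decide))
              (by intro h; exact absurd h.1 (by decide)),
            c2rest 2 j₀ (by intro h; exact absurd h.1 (by decide))
              (by intro h; exact absurd h.1 (by decide)),
            c1rest 2 j₀ (by intro h; exact absurd h.1 (by decide))
              (by intro h; exact absurd h.1 (by decide))]
      · rw [c3s, c2s, c1s]
    · -- op2 : a₂ := a₂ % a₁'
      obtain ⟨v2, E2, c2a, c2b, c2rest, c2s⟩ :=
        umove 1 0 (by decide) 0 1 (-(v1.1 1 0 / v1.1 0 0)) v1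
      have hv2a2 : v2.1 1 0 = v1.1 1 0 % v1.1 0 0 := by
        rw [c2a, flip_one, Int.emod_def]; ring
      have hv2a : v2.1 0 0 = v1.1 0 0 := c2rest 0 0 (by decide) (by decide)
      have hv2b1 : v2.1 0 1 = 0 := by
        rw [c2b, flip_zero, hv1b1, hv1b2]; ring
      have hv2b2 : v2.1 1 1 = 0 := by
        rw [c2rest 1 1 (by decide) (by decide), hv1b2]
      have hm : (v2.1 1 0).natAbs < n := by
        rw [hv2a2]
        calc (v1.1 1 0 % v1.1 0 0).natAbs < (v1.1 0 0).natAbs := natAbs_lt_of_emod hz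
          _ < (v.1 1 0).natAbs := by rw [hv1a]; exact natAbs_lt_of_emod ha2
          _ ≤ n := hn
      obtain ⟨v3, E3, c3a2, c3b1, c3b2, c3d1, c3d2, c3r, c3s⟩ :=
        ih (v2.1 1 0).natAbs hm v2 le_rfl hv2b1 hv2b2
      have hda1 : v3.1 0 0 ∣ v1.1 0 0 := hv2a ▸ c3d1
      have hda2 : v3.1 0 0 ∣ v.1 1 0 := by
        have h := Int.emod_add_mul_ediv (v1.1 1 0) (v1.1 0 0)
        rw [hv1a2] at h
        rw [← h]
        have hc : v3.1 0 0 ∣ v.1 1 0 % v1.1 0 0 := by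
          rw [← hv1a2, ← hv2a2]; exact c3d2
        exact dvd_add hc (Dvd.dvd.mul_right hda1 _)
      refine ⟨v3, (E1.trans E2).trans E3, c3a2, c3b1, c3b2, ?_, hda2, ?_, ?_⟩
      · have h := Int.emod_add_mul_ediv (v.1 0 0) (v.1 1 0)
        rw [← h, ← hv1a]
        exact dvd_add hda1 (Dvd.dvd.mul_right hda2 _)
      · rw [c3r]
        funext j₀
        rw [c2rest 2 j₀ (by intro h; exact absurd h.1 (by decide))
              (by intro h; exact absurd h.1 (by decide)),
            c1rest 2 j₀ (by intro h; exact absurd h.1 (by decide))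
              (by intro h; exact absurd h.1 (by decide))]
      · rw [c3s, c2s, c1s]


lemma pairE8_congr {u v : Theta} (h : u.2.1 = v.2.1) (j : Fin 2) (a : Fin 8) :
    pairE8 u j a = pairE8 v j a := by
  unfold pairE8; rw [h]

/-- Generic absorb step : given `b₁ = b₂ = a₂ = 0` and a "pure add of `g` to `a₁`"
operation available at every reachable state, end with `a₁` dividing both its old
value and `g`. -/
lemma absorb (v : Theta) (g : ℤ)
    (hb1 : v.1 0 1 = 0) (hb2 : v.1 1 1 = 0) (ha2 : v.1 1 0 = 0)
    (hadd : ∀ u : Theta, u.1 0 1 = 0 → u.1 2 = v.1 2 → u.2 = v.2 →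
      ∃ u', Eqv u u' ∧ u'.1 0 0 = u.1 0 0 + g ∧ u'.1 0 1 = 0 ∧
        u'.1 1 = u.1 1 ∧ u'.1 2 = u.1 2 ∧ u'.2 = u.2) :
    ∃ v', Eqv v v' ∧ v'.1 0 0 ∣ v.1 0 0 ∧ v'.1 0 0 ∣ g ∧
      v'.1 0 1 = 0 ∧ v'.1 1 0 = 0 ∧ v'.1 1 1 = 0 ∧ v'.1 2 = v.1 2 ∧ v'.2 = v.2 := by
  -- copy a₁ into a₂
  obtain ⟨v1, E1, c1a, c1b, c1rest, c1s⟩ := umove 1 0 (by decide) 0 1 1 v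
  have h1a2 : v1.1 1 0 = v.1 0 0 := by rw [c1a, flip_one, ha2]; ring
  have h1b1 : v1.1 0 1 = 0 := by rw [c1b, flip_zero, hb1, hb2]; ring
  have h1a1 : v1.1 0 0 = v.1 0 0 := c1rest 0 0 (by decide) (by decide)
  have h1b2 : v1.1 1 1 = 0 := by rw [c1rest 1 1 (by decide) (by decide), hb2]
  have h1r : v1.1 2 = v.1 2 := by
    funext j₀
    exact c1rest 2 j₀ (by intro h; exact absurd h.1 (by decide))
      (by intro h; exact absurd h.1 (by decide))
  -- add g to a₁
  obtain ⟨v2, E2, c2a, c2b1, c2bl, c2r, c2s⟩ := hadd v1 h1b1 h1r c1s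
  have h2a1 : v2.1 0 0 = v.1 0 0 + g := by rw [c2a, h1a1]
  have h2a2 : v2.1 1 0 = v.1 0 0 := by rw [congrFun c2bl 0, h1a2]
  have h2b2 : v2.1 1 1 = 0 := by rw [congrFun c2bl 1, h1b2]
  -- euclid
  obtain ⟨v3, E3, c3a2, c3b1, c3b2, c3d1, c3d2, c3r, c3s⟩ := phase3 v2 c2b1 h2b2
  refine ⟨v3, (E1.trans E2).trans E3, ?_, ?_, c3b1, c3a2, c3b2, ?_, ?_⟩
  · rw [← h2a2]; exact c3d2
  · have hd1 : v3.1 0 0 ∣ v.1 0 0 + g := by rw [← h2a1]; exact c3d1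
    have hd2 : v3.1 0 0 ∣ v.1 0 0 := by rw [← h2a2]; exact c3d2
    have := dvd_sub hd1 hd2
    simpa using this
  · rw [c3r, c2r, h1r]
  · rw [c3s, c2s, c1s]

/-- absorb the value `a₃`. -/
lemma absorbA3 (v : Theta) (hb1 : v.1 0 1 = 0) (hb2 : v.1 1 1 = 0) (ha2 : v.1 1 0 = 0) :
    ∃ v', Eqv v v' ∧ v'.1 0 0 ∣ v.1 0 0 ∧ v'.1 0 0 ∣ v.1 2 0 ∧
      v'.1 0 1 = 0 ∧ v'.1 1 0 = 0 ∧ v'.1 1 1 = 0 ∧ v'.1 2 = v.1 2 ∧ v'.2 = v.2 := by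
  apply absorb v (v.1 2 0) hb1 hb2 ha2
  intro u hub1 hur hus
  obtain ⟨u', E, ca, cb, crest, cs⟩ := umove 0 2 (by decide) 0 1 1 u
  refine ⟨u', E, ?_, ?_, ?_, ?_, cs⟩
  · rw [ca, flip_one, ← hur]; ring
  · rw [crest 0 1 (by decide) (by decide), hub1]
  · funext j₀
    exact crest 1 j₀ (by intro h; exact absurd h.1 (by decide))
      (by intro h; exact absurd h.1 (by decide))
  · funext j₀
    by_cases hj : j₀ = 1
    · subst hj; rw [cb, flip_zero, hub1]; ring
    · have hj0 : j₀ = 0 := by omega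
      subst hj0
      exact crest 2 0 (by intro h; exact absurd h.1 (by decide)) (by decide)

/-- absorb the value `b₃`. -/
lemma absorbB3 (v : Theta) (hb1 : v.1 0 1 = 0) (hb2 : v.1 1 1 = 0) (ha2 : v.1 1 0 = 0) :
    ∃ v', Eqv v v' ∧ v'.1 0 0 ∣ v.1 0 0 ∧ v'.1 0 0 ∣ v.1 2 1 ∧
      v'.1 0 1 = 0 ∧ v'.1 1 0 = 0 ∧ v'.1 1 1 = 0 ∧ v'.1 2 = v.1 2 ∧ v'.2 = v.2 := by
  apply absorb v (v.1 2 1) hb1 hb2 ha2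
  intro u hub1 hur hus
  obtain ⟨u', E, ca, cb, crest, cs⟩ := umove 0 2 (by decide) 0 0 1 u
  refine ⟨u', E, ?_, ?_, ?_, ?_, cs⟩
  · rw [ca, flip_zero, ← hur]; ring
  · rw [crest 0 1 (by decide) (by decide), hub1]
  · funext j₀
    exact crest 1 j₀ (by intro h; exact absurd h.1 (by decide))
      (by intro h; exact absurd h.1 (by decide))
  · funext j₀
    by_cases hj : j₀ = 0
    · subst hj; rw [cb, flip_zero, hub1]; ring
    · have hj1 : j₀ = 1 := by omega
      subst hj1
      exact crest 2 1 (by intro h; exact absurd h.1 (by decide)) (by decide)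

/-- absorb the value `-pairE8 v j a`. -/
lemma absorbM (v : Theta) (j : Fin 2) (a : Fin 8)
    (hb1 : v.1 0 1 = 0) (hb2 : v.1 1 1 = 0) (ha2 : v.1 1 0 = 0) :
    ∃ v', Eqv v v' ∧ v'.1 0 0 ∣ v.1 0 0 ∧ v'.1 0 0 ∣ pairE8 v j a ∧
      v'.1 0 1 = 0 ∧ v'.1 1 0 = 0 ∧ v'.1 1 1 = 0 ∧ v'.1 2 = v.1 2 ∧ v'.2 = v.2 := by
  have hadd : ∀ u : Theta, u.1 0 1 = 0 → u.1 2 = v.1 2 → u.2 = v.2 →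
      ∃ u', Eqv u u' ∧ u'.1 0 0 = u.1 0 0 + -(pairE8 v j a) ∧ u'.1 0 1 = 0 ∧
        u'.1 1 = u.1 1 ∧ u'.1 2 = u.1 2 ∧ u'.2 = u.2 := by
    intro u hub1 hur hus
    obtain ⟨u', E, ca, crest, cm, cs2⟩ := mmove 0 0 j a 1 u
    have hpair : pairE8 u j a = pairE8 v j a :=
      pairE8_congr (congrArg Prod.fst hus) j a
    refine ⟨u', E, ?_, ?_, ?_, ?_, ?_⟩
    · rw [ca, flip_zero, hub1, hpair]; ring
    · rw [crest 0 1 (by decide), hub1]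
    · funext j₀
      exact crest 1 j₀ (by intro h; exact absurd h.1 (by decide))
    · funext j₀
      exact crest 2 j₀ (by intro h; exact absurd h.1 (by decide))
    · have hm : u'.2.1 = u.2.1 := by
        funext j₀ a₀
        rw [cm j₀ a₀, flip_zero, hub1]
        simp
      exact Prod.ext hm cs2
  obtain ⟨v', E, d1, d2, z1, z2, z3, r, s⟩ :=
    absorb v (-(pairE8 v j a)) hb1 hb2 ha2 hadd
  exact ⟨v', E, d1, (dvd_neg.mp d2), z1, z2, z3, r, s⟩

/-- absorb the value `2 * t`. -/
lemma absorbT (v : Theta)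
    (hb1 : v.1 0 1 = 0) (hb2 : v.1 1 1 = 0) (ha2 : v.1 1 0 = 0) :
    ∃ v', Eqv v v' ∧ v'.1 0 0 ∣ v.1 0 0 ∧ v'.1 0 0 ∣ 2 * v.2.2 ∧
      v'.1 0 1 = 0 ∧ v'.1 1 0 = 0 ∧ v'.1 1 1 = 0 ∧ v'.1 2 = v.1 2 ∧ v'.2 = v.2 := by
  have hadd : ∀ u : Theta, u.1 0 1 = 0 → u.1 2 = v.1 2 → u.2 = v.2 →
      ∃ u', Eqv u u' ∧ u'.1 0 0 = u.1 0 0 + -(2 * v.2.2) ∧ u'.1 0 1 = 0 ∧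
        u'.1 1 = u.1 1 ∧ u'.1 2 = u.1 2 ∧ u'.2 = u.2 := by
    intro u hub1 hur hus
    obtain ⟨u', E, ca, crest, cm, cs2⟩ := smove 0 0 1 u
    have ht : u.2.2 = v.2.2 := congrArg Prod.snd hus
    refine ⟨u', E, ?_, ?_, ?_, ?_, ?_⟩
    · rw [ca, flip_zero, hub1, ht]; ring
    · rw [crest 0 1 (by decide), hub1]
    · funext j₀
      exact crest 1 j₀ (by intro h; exact absurd h.1 (by decide))
    · funext j₀
      exact crest 2 j₀ (by intro h; exact absurd h.1 (by decide))
    · refine Prod.ext cm ?_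
      rw [cs2, flip_zero, hub1]
      ring
  obtain ⟨v', E, d1, d2, z1, z2, z3, r, s⟩ :=
    absorb v (-(2 * v.2.2)) hb1 hb2 ha2 hadd
  exact ⟨v', E, d1, (dvd_neg.mp d2), z1, z2, z3, r, s⟩


/-- Absorb all the `E₈` pairings listed in `l`. -/
lemma gatherM (l : List (Fin 2 × Fin 8)) : ∀ (v : Theta),
    v.1 0 1 = 0 → v.1 1 1 = 0 → v.1 1 0 = 0 →
    ∃ v', Eqv v v' ∧ v'.1 0 0 ∣ v.1 0 0 ∧
      (∀ p ∈ l, v'.1 0 0 ∣ pairE8 v p.1 p.2) ∧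
      v'.1 0 1 = 0 ∧ v'.1 1 0 = 0 ∧ v'.1 1 1 = 0 ∧ v'.1 2 = v.1 2 ∧ v'.2 = v.2 := by
  induction l with
  | nil =>
    intro v hb1 hb2 ha2
    exact ⟨v, Eqv.refl v, dvd_refl _, by simp, hb1, ha2, hb2, rfl, rfl⟩
  | cons p l ih =>
    intro v hb1 hb2 ha2
    obtain ⟨v1, E1, d1, d2, z1, z2, z3, r1, s1⟩ := absorbM v p.1 p.2 hb1 hb2 ha2
    obtain ⟨v2, E2, e1, e2, y1, y2, y3, r2, s2⟩ := ih v1 z1 z3 z2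
    refine ⟨v2, E1.trans E2, dvd_trans e1 d1, ?_, y1, y2, y3, by rw [r2, r1],
      by rw [s2, s1]⟩
    intro q hq
    rcases List.mem_cons.mp hq with h | h
    · subst h; exact dvd_trans e1 d2
    · have := e2 q h
      rwa [pairE8_congr (congrArg Prod.fst s1) q.1 q.2] at this

/-- After the three Euclid phases, absorb every generator:  ends with `a₁`
dividing all coordinate values (of the resulting vector). -/
lemma gather (v : Theta) (hb1 : v.1 0 1 = 0) (hb2 : v.1 1 1 = 0) (ha2 : v.1 1 0 = 0) :
    ∃ v', Eqv v v' ∧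
      (∀ j a, v'.1 0 0 ∣ pairE8 v' j a) ∧ v'.1 0 0 ∣ v'.1 2 0 ∧
      v'.1 0 0 ∣ v'.1 2 1 ∧ v'.1 0 0 ∣ 2 * v'.2.2 ∧
      v'.1 0 1 = 0 ∧ v'.1 1 0 = 0 ∧ v'.1 1 1 = 0 := by
  obtain ⟨v1, E1, a1, a2, z1, z2, z3, r1, s1⟩ := absorbA3 v hb1 hb2 ha2
  obtain ⟨v2, E2, b1, b2, y1, y2, y3, r2, s2⟩ := absorbB3 v1 z1 z3 z2
  obtain ⟨v3, E3, c1, c2, x1, x2, x3, r3, s3⟩ :=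
    gatherM ((List.finRange 2).flatMap (fun j => (List.finRange 8).map (fun a => (j, a))))
      v2 y1 y3 y2
  obtain ⟨v4, E4, f1, f2, w1, w2, w3, r4, s4⟩ := absorbT v3 x1 x3 x2
  have hD3 : v4.1 0 0 ∣ v3.1 0 0 := f1
  have hD2 : v4.1 0 0 ∣ v2.1 0 0 := dvd_trans f1 c1
  have hD1 : v4.1 0 0 ∣ v1.1 0 0 := dvd_trans hD2 b1
  refine ⟨v4, ((E1.trans E2).trans E3).trans E4, ?_, ?_, ?_, ?_, w1, w2, w3⟩
  · intro j a
    have hp : pairE8 v4 j a = pairE8 v2 j a := by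
      rw [pairE8_congr (congrArg Prod.fst s4) j a, pairE8_congr (congrArg Prod.fst s3) j a]
    rw [hp]
    refine dvd_trans hD3 (c2 (j, a) ?_)
    simp [List.mem_flatMap, List.mem_map, List.mem_finRange]
  · have h40 : v4.1 2 0 = v1.1 2 0 := by rw [congrFun r4 0, congrFun r3 0, congrFun r2 0]
    have h10 : v1.1 2 0 = v.1 2 0 := congrFun r1 0
    rw [h40]
    have : v1.1 0 0 ∣ v1.1 2 0 := by rw [h10]; exact a2
    exact dvd_trans hD1 this
  · have h41 : v4.1 2 1 = v2.1 2 1 := by rw [congrFun r4 1, congrFun r3 1]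
    have h21 : v2.1 2 1 = v1.1 2 1 := congrFun r2 1
    rw [h41, h21]
    have h11 : v1.1 2 1 = v.1 2 1 := congrFun r1 1
    have : v2.1 0 0 ∣ v2.1 2 1 := by rw [congrFun r2 1, h11, ← congrFun r1 1]; exact b2
    exact dvd_trans hD2 (by rwa [h21] at this)
  · have ht : v4.2.2 = v3.2.2 := congrArg Prod.snd s4
    rw [ht]
    exact f2

/-- Clear the third hyperbolic block using the pivot `a₁` (divisibility assumed). -/
lemma clearA3B3 (v : Theta) (hd3 : v.1 0 0 ∣ v.1 2 0) (hd4 : v.1 0 0 ∣ v.1 2 1) :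
    ∃ v', Eqv v v' ∧ v'.1 0 0 = v.1 0 0 ∧ v'.1 1 = v.1 1 ∧
      v'.1 2 0 = 0 ∧ v'.1 2 1 = 0 ∧ v'.2 = v.2 := by
  obtain ⟨v1, E1, c1a, c1b, c1rest, c1s⟩ :=
    umove 0 2 (by decide) 1 0 (v.1 2 0 / v.1 0 0) v
  have h1a3 : v1.1 2 0 = 0 := by
    rw [c1b, flip_one, Int.ediv_mul_cancel hd3]
    ring
  have h1a1 : v1.1 0 0 = v.1 0 0 := c1rest 0 0 (by decide) (by decide)
  have h1b3 : v1.1 2 1 = v.1 2 1 := c1rest 2 1 (by decide) (by decide)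
  obtain ⟨v2, E2, c2a, c2b, c2rest, c2s⟩ :=
    umove 0 2 (by decide) 1 1 (v1.1 2 1 / v1.1 0 0) v1
  refine ⟨v2, E1.trans E2, ?_, ?_, ?_, ?_, ?_⟩
  · rw [c2rest 0 0 (by decide) (by decide), h1a1]
  · funext j₀
    rw [c2rest 1 j₀ (by intro h; exact absurd h.1 (by decide))
          (by intro h; exact absurd h.1 (by decide)),
        c1rest 1 j₀ (by intro h; exact absurd h.1 (by decide))
          (by intro h; exact absurd h.1 (by decide))]
  · rw [c2rest 2 0 (by decide) (by decide), h1a3]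
  · rw [c2b, flip_one, h1b3, h1a1, Int.ediv_mul_cancel hd4]
    ring
  · rw [c2s, c1s]

/-- Clear the `E₈` entries listed in `l` using the pivot `a₁`. -/
lemma clearMl (l : List (Fin 2 × Fin 8)) : ∀ (v : Theta),
    (∀ p ∈ l, v.1 0 0 ∣ v.2.1 p.1 p.2) →
    ∃ v', Eqv v v' ∧ (∀ p ∈ l, v'.2.1 p.1 p.2 = 0) ∧
      (∀ p : Fin 2 × Fin 8, p ∉ l → v'.2.1 p.1 p.2 = v.2.1 p.1 p.2) ∧
      v'.1 0 0 = v.1 0 0 ∧ v'.1 1 = v.1 1 ∧ v'.1 2 = v.1 2 ∧ v'.2.2 = v.2.2 := by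
  induction l with
  | nil =>
    intro v _
    exact ⟨v, Eqv.refl v, by simp, fun p _ => rfl, rfl, rfl, rfl, rfl⟩
  | cons p l ih =>
    intro v hdvd
    obtain ⟨v1, E1, ca, crest, cm, cs2⟩ :=
      mmove 0 1 p.1 p.2 (v.2.1 p.1 p.2 / v.1 0 0) v
    have hp0 : v1.2.1 p.1 p.2 = 0 := by
      rw [cm p.1 p.2, if_pos ⟨rfl, rfl⟩, flip_one,
        Int.ediv_mul_cancel (hdvd p (List.mem_cons_self (a := p) (l := l)))]
      ring
    have hother : ∀ q : Fin 2 × Fin 8, q ≠ p → v1.2.1 q.1 q.2 = v.2.1 q.1 q.2 := by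
      intro q hq
      rw [cm q.1 q.2, if_neg, sub_zero]
      intro h
      exact hq (Prod.ext h.1 h.2)
    have h1a1 : v1.1 0 0 = v.1 0 0 := crest 0 0 (by decide)
    have hdvd1 : ∀ q ∈ l, v1.1 0 0 ∣ v1.2.1 q.1 q.2 := by
      intro q hql
      by_cases hq : q = p
      · subst hq; rw [hp0]; exact dvd_zero _
      · rw [hother q hq, h1a1]
        exact hdvd q (List.mem_cons_of_mem p hql)
    obtain ⟨v2, E2, g1, g2, g3, g4, g5, g6⟩ := ih v1 hdvd1
    refine ⟨v2, E1.trans E2, ?_, ?_, by rw [g3, h1a1], ?_, ?_, by rw [g6, cs2]⟩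
    · intro q hq
      rcases List.mem_cons.mp hq with h | h
      · subst h
        by_cases hql : q ∈ l
        · exact g1 q hql
        · rw [g2 q hql, hp0]
      · exact g1 q h
    · intro q hq
      have hq1 : q ∉ l := fun h => hq (List.mem_cons_of_mem p h)
      have hq2 : q ≠ p := fun h => hq (h ▸ List.mem_cons_self (a := p) (l := l))
      rw [g2 q hq1, hother q hq2]
    · rw [g4]
      funext j₀
      exact crest 1 j₀ (by intro h; exact absurd h.1 (by decide))
    · rw [g5]
      funext j₀
      exact crest 2 j₀ (by intro h; exact absurd h.1 (by decide))

/-- Reduce `t` modulo the pivot `a₁`. -/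
lemma setT (v : Theta) :
    ∃ v', Eqv v v' ∧ v'.2.2 = v.2.2 % v.1 0 0 ∧ v'.1 0 0 = v.1 0 0 ∧
      v'.1 1 = v.1 1 ∧ v'.1 2 = v.1 2 ∧ v'.2.1 = v.2.1 := by
  obtain ⟨v1, E1, ca, crest, cm, cs2⟩ := smove 0 1 (v.2.2 / v.1 0 0) v
  refine ⟨v1, E1, ?_, crest 0 0 (by decide), ?_, ?_, cm⟩
  · rw [cs2, flip_one, Int.emod_def]
    ring
  · funext j₀
    exact crest 1 j₀ (by intro h; exact absurd h.1 (by decide))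
  · funext j₀
    exact crest 2 j₀ (by intro h; exact absurd h.1 (by decide))


lemma Eqv.isDiv {v w : Theta} (h : Eqv v w) {d : ℕ} (hd : IsDiv v d) : IsDiv w d := by
  obtain ⟨φ, hiso, hv⟩ := h
  constructor
  · intro u
    have h2 : bform w u = bform v (φ.symm u) := by
      conv_lhs => rw [← hv, ← φ.apply_symm_apply u]
      rw [hiso]
    rw [h2]
    exact hd.1 _
  · intro e he
    apply hd.2
    intro u
    have h2 : bform v u = bform w (φ u) := by rw [← hv, hiso]
    rw [h2]
    exact he _

lemma Eqv.prim {v w : Theta} (h : Eqv v w) (hp : ThetaPrimitive v) : ThetaPrimitive w := by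
  obtain ⟨φ, hiso, hv⟩ := h
  rintro ⟨n, u, hn, hw⟩
  exact hp ⟨n, φ.symm u, hn, by rw [← φ.symm_apply_apply v, hv, hw, map_smul]⟩

lemma Eqv.bself {v w : Theta} (h : Eqv v w) : bform w w = bform v v := by
  obtain ⟨φ, hiso, hv⟩ := h
  rw [← hv, hiso]

lemma eq_zero_of_isDiv_zero {v : Theta} (h : IsDiv v 0) : v = 0 := by
  have h0 : ∀ w : Theta, (0:ℤ) ∣ bform v w := by
    intro w
    have := h.1 w
    simpa using this
  obtain ⟨h1, h2, h3⟩ := dvd_coords_of_dvd_bform h0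
  have hm : ∀ j a, v.2.1 j a = 0 := by
    intro j a
    exact zero_dvd_iff.mp (dvd_entry_of_dvd_pair (h2 j) a)
  have ht : v.2.2 = 0 := by
    have := zero_dvd_iff.mp h3
    omega
  refine Prod.ext ?_ (Prod.ext ?_ ht)
  · funext i j
    exact zero_dvd_iff.mp (h1 i j)
  · funext j a
    exact hm j a

/-- The canonical vector `d·e₁ + B·f₁ + (d-1)·s`. -/
def canvec (d : ℕ) (B : ℤ) : Theta :=
  (fun i j => if i = 0 then (if j = 0 then (d:ℤ) else B) else 0, 0, (d:ℤ) - 1)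

lemma bform_canvec (d : ℕ) (B : ℤ) :
    bform (canvec d B) (canvec d B) = 2*(d:ℤ)*B - 2*((d:ℤ)-1)^2 := by
  unfold bform canvec
  simp [Fin.sum_univ_three, show (1:Fin 3) ≠ 0 by decide, show (2:Fin 3) ≠ 0 by decide]
  ring

/-- The full list of `E₈`-coordinate positions. -/
def allM : List (Fin 2 × Fin 8) :=
  (List.finRange 2).flatMap (fun j => (List.finRange 8).map (fun a => (j, a)))

lemma mem_allM (p : Fin 2 × Fin 8) : p ∈ allM := by
  simp [allM, List.mem_flatMap, List.mem_map, List.mem_finRange]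


/-- Main reduction: every primitive vector with divisibility `d ≠ 0` is
equivalent to the canonical vector `canvec d B` for some `B`; moreover `d ∈ {1,2}`. -/
lemma reduce (v : Theta) (hvp : ThetaPrimitive v) (d : ℕ) (hd : IsDiv v d)
    (hd0 : d ≠ 0) : ∃ B : ℤ, Eqv v (canvec d B) ∧ (d = 1 ∨ d = 2) := by
  obtain ⟨v1, E1, p1b2, p1r, p1s⟩ := phase1 v
  obtain ⟨v2, E2, p2b1, p2bl, p2s⟩ := phase2 v1
  have h2b2 : v2.1 1 1 = 0 := by rw [congrFun p2bl 1, p1b2]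
  obtain ⟨v3, E3, p3a2, p3b1, p3b2, _, _, _, _⟩ := phase3 v2 p2b1 h2b2
  obtain ⟨v4, E4, g1, g2, g3, g4, z1, z2, z3⟩ := gather v3 p3b1 p3b2 p3a2
  have Ev4 : Eqv v v4 := ((E1.trans E2).trans E3).trans E4
  have hd4 : IsDiv v4 d := Ev4.isDiv hd
  have hdvd1 : (d:ℤ) ∣ v4.1 0 0 := (dvd_coords_of_dvd_bform hd4.1).1 0 0
  have hcoorddvd : ∀ w, v4.1 0 0 ∣ bform v4 w := by
    apply dvd_bform_of_dvd_coords
    · intro i j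
      fin_cases i <;> fin_cases j
      · exact dvd_refl _
      · exact show v4.1 0 0 ∣ v4.1 0 1 by rw [z1]; exact dvd_zero _
      · exact show v4.1 0 0 ∣ v4.1 1 0 by rw [z2]; exact dvd_zero _
      · exact show v4.1 0 0 ∣ v4.1 1 1 by rw [z3]; exact dvd_zero _
      · exact g2
      · exact g3
    · exact g1
    · exact g4
  have hdvd2 : v4.1 0 0 ∣ (d:ℤ) := hd4.2 _ hcoorddvd
  have hnat : (v4.1 0 0).natAbs = d := by
    have h1 : (v4.1 0 0).natAbs ∣ d := by
      have := Int.natAbs_dvd_natAbs.mpr hdvd2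
      simpa using this
    have h2 : d ∣ (v4.1 0 0).natAbs := by
      have := Int.natAbs_dvd_natAbs.mpr hdvd1
      simpa using this
    exact Nat.dvd_antisymm h1 h2
  -- sign normalisation
  have hsign : ∃ v5, Eqv v v5 ∧ v5.1 0 0 = (d:ℤ) ∧ v5.1 1 0 = 0 ∧ v5.1 1 1 = 0 ∧
      v5.1 0 0 ∣ v5.1 2 0 ∧ v5.1 0 0 ∣ v5.1 2 1 ∧
      (∀ j a, v5.1 0 0 ∣ pairE8 v5 j a) ∧ v5.1 0 0 ∣ 2 * v5.2.2 := by
    by_cases hpos : 0 ≤ v4.1 0 0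
    · refine ⟨v4, Ev4, ?_, z2, z3, g2, g3, g1, g4⟩
      rw [← hnat, Int.natAbs_of_nonneg hpos]
    · obtain ⟨v5, E5, n1, n2, n3⟩ := negmove v4
      have ha1 : v5.1 0 0 = (d:ℤ) := by
        rw [n1 0, ← hnat]
        rw [← Int.natAbs_of_nonneg (by omega : (0:ℤ) ≤ -(v4.1 0 0)), Int.natAbs_neg]
      have hneg : v5.1 0 0 = -(v4.1 0 0) := n1 0
      refine ⟨v5, Ev4.trans E5, ha1, ?_, ?_, ?_, ?_, ?_, ?_⟩
      · rw [n2 1 0 (by decide), z2]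
      · rw [n2 1 1 (by decide), z3]
      · rw [hneg, n2 2 0 (by decide), neg_dvd]; exact g2
      · rw [hneg, n2 2 1 (by decide), neg_dvd]; exact g3
      · intro j a
        rw [hneg, pairE8_congr (congrArg Prod.fst n3) j a, neg_dvd]
        exact g1 j a
      · rw [hneg, show v5.2.2 = v4.2.2 from congrArg Prod.snd n3, neg_dvd]
        exact g4
  obtain ⟨v5, Ev5, ha1, h5a2, h5b2, h5d3, h5d4, h5dm, h5dt⟩ := hsign
  -- clear third block
  obtain ⟨v6, E6, c6a, c6bl, c6a3, c6b3, c6s⟩ := clearA3B3 v5 h5d3 h5d4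
  -- clear E₈ entries
  have h6m : v6.2.1 = v5.2.1 := congrArg Prod.fst c6s
  have h6dvd : ∀ p ∈ allM, v6.1 0 0 ∣ v6.2.1 p.1 p.2 := by
    intro p _
    rw [c6a, h6m]
    exact dvd_entry_of_dvd_pair (h5dm p.1) p.2
  obtain ⟨v7, E7, m1, m2, m3, m4, m5, m6⟩ := clearMl allM v6 h6dvd
  -- reduce t
  obtain ⟨v8, E8', ht8eq, t2, t3, t4, t5⟩ := setT v7
  have Ev8 : Eqv v v8 := ((Ev5.trans E6).trans E7).trans E8'
  -- coordinates of v8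
  have f00 : v8.1 0 0 = (d:ℤ) := by rw [t2, m3, c6a, ha1]
  have f10 : v8.1 1 0 = 0 := by
    rw [congrFun t3 0, congrFun m4 0, congrFun c6bl 0, h5a2]
  have f11 : v8.1 1 1 = 0 := by
    rw [congrFun t3 1, congrFun m4 1, congrFun c6bl 1, h5b2]
  have f20 : v8.1 2 0 = 0 := by
    rw [congrFun t4 0, congrFun m5 0, c6a3]
  have f21 : v8.1 2 1 = 0 := by
    rw [congrFun t4 1, congrFun m5 1, c6b3]
  have fm : v8.2.1 = 0 := by
    funext j a
    rw [congrFun (congrFun t5 j) a]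
    exact m1 (j, a) (mem_allM _)
  have dpos : (0:ℤ) < (d:ℤ) := by exact_mod_cast Nat.pos_of_ne_zero hd0
  have ft0 : v8.2.2 = v7.2.2 % (d:ℤ) := by
    rw [ht8eq, m3, c6a, ha1]
  have ht8nonneg : 0 ≤ v8.2.2 := by
    rw [ft0]; exact Int.emod_nonneg _ (by omega)
  have ht8lt : v8.2.2 < (d:ℤ) := by
    rw [ft0]
    have := Int.emod_lt_of_pos v7.2.2 dpos
    exact this
  -- divisibility facts at v8
  have hd8 : IsDiv v8 d := Ev8.isDiv hd
  have hp8 : ThetaPrimitive v8 := Ev8.prim hvp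
  have hdB : (d:ℤ) ∣ v8.1 0 1 := (dvd_coords_of_dvd_bform hd8.1).1 0 1
  have hd2t : (d:ℤ) ∣ 2 * v8.2.2 := (dvd_coords_of_dvd_bform hd8.1).2.2
  -- gcd of d and t is 1 by primitivity
  have hg1 : Nat.gcd d (v8.2.2).natAbs = 1 := by
    by_contra hg
    have hgne : Nat.gcd d (v8.2.2).natAbs ≠ 0 := by
      intro h0
      exact hd0 (Nat.eq_zero_of_gcd_eq_zero_left h0)
    set g := Nat.gcd d (v8.2.2).natAbs with hgdef
    have hg2 : 2 ≤ g := by omega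
    have hgd : (g:ℤ) ∣ (d:ℤ) := Int.natCast_dvd_natCast.mpr (Nat.gcd_dvd_left _ _)
    have hgt : (g:ℤ) ∣ v8.2.2 := by
      have h1 : (g:ℤ) ∣ ((v8.2.2).natAbs : ℤ) :=
        Int.natCast_dvd_natCast.mpr (Nat.gcd_dvd_right _ _)
      rwa [Int.natAbs_of_nonneg ht8nonneg] at h1
    apply hp8
    refine ⟨(g:ℤ), (fun i j => v8.1 i j / g, 0, v8.2.2 / g), ?_, ?_⟩
    · rw [abs_of_nonneg (by positivity)]
      exact_mod_cast hg2
    · have hdivall : ∀ i j, (g:ℤ) ∣ v8.1 i j := by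
        intro i j
        fin_cases i <;> fin_cases j
        · exact show (g:ℤ) ∣ v8.1 0 0 by rw [f00]; exact hgd
        · exact dvd_trans hgd hdB
        · exact show (g:ℤ) ∣ v8.1 1 0 by rw [f10]; exact dvd_zero _
        · exact show (g:ℤ) ∣ v8.1 1 1 by rw [f11]; exact dvd_zero _
        · exact show (g:ℤ) ∣ v8.1 2 0 by rw [f20]; exact dvd_zero _
        · exact show (g:ℤ) ∣ v8.1 2 1 by rw [f21]; exact dvd_zero _
      refine Prod.ext ?_ (Prod.ext ?_ ?_)
      · funext i j
        simp only [Prod.smul_fst, Pi.smul_apply, smul_eq_mul]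
        exact (Int.mul_ediv_cancel' (hdivall i j)).symm
      · simp only [Prod.smul_snd, Prod.smul_fst]
        rw [fm]
        simp
      · simp only [Prod.smul_snd, smul_eq_mul]
        exact (Int.mul_ediv_cancel' hgt).symm
  -- hence d ∣ 2
  have hd2 : d ∣ 2 := by
    have h1 : d ∣ 2 * (v8.2.2).natAbs := by
      have := Int.natAbs_dvd_natAbs.mpr hd2t
      simpa [Int.natAbs_mul] using this
    exact (Nat.Coprime.dvd_of_dvd_mul_right hg1 h1)
  have hd12 : d = 1 ∨ d = 2 := (Nat.dvd_prime Nat.prime_two).mp hd2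
  -- value of t
  have ft : v8.2.2 = (d:ℤ) - 1 := by
    rcases hd12 with h | h
    · rw [h] at ht8lt ⊢
      omega
    · rw [h] at ht8lt ⊢
      have h01 : v8.2.2 = 0 ∨ v8.2.2 = 1 := by omega
      rcases h01 with h0 | h1
      · exfalso
        rw [h, h0] at hg1
        simp at hg1
      · omega
  -- final identification
  refine ⟨v8.1 0 1, ?_, hd12⟩
  have hfin : v8 = canvec d (v8.1 0 1) := by
    refine Prod.ext ?_ (Prod.ext ?_ ?_)
    · funext i j
      fin_cases i <;> fin_cases j
      · exact f00
      · rfl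
      · exact f10
      · exact f11
      · exact f20
      · exact f21
    · exact fm
    · exact ft
  rw [← hfin]
  exact Ev8


end ThetaW

/-- Eichler/Nikulin criterion for the lattice `Θ = U³ ⊕ E₈(−1)² ⊕ ⟨−2⟩`: two
primitive nonzero vectors `v, w` lie in the same orbit of the isometry group
`O(Θ)` if and only if `q(v) = q(w)` and `div(v) = div(w)`. -/
theorem theta_orbit_iff_square_and_div (v w : Theta)
    (hv : ThetaPrimitive v) (hw : ThetaPrimitive w)
    (hv0 : v ≠ 0) (hw0 : w ≠ 0)
    (dv dw : ℕ) (hdv : IsDiv v dv) (hdw : IsDiv w dw) :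
    (∃ φ : Theta ≃ₗ[ℤ] Theta,
        (∀ x y : Theta, bform (φ x) (φ y) = bform x y) ∧ φ v = w) ↔
      (bform v v = bform w w ∧ dv = dw) := by

  constructor
  · rintro ⟨φ, hiso, hfv⟩
    have hE : ThetaW.Eqv v w := ⟨φ, hiso, hfv⟩
    constructor
    · exact hE.bself.symm
    · have hdw' : IsDiv w dv := hE.isDiv hdv
      have h1 : (dv:ℤ) ∣ (dw:ℤ) := hdw.2 _ hdw'.1
      have h2 : (dw:ℤ) ∣ (dv:ℤ) := hdw'.2 _ hdw.1
      exact Nat.dvd_antisymm (Int.natCast_dvd_natCast.mp h1) (Int.natCast_dvd_natCast.mp h2)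
  · rintro ⟨hq, hdd⟩
    have hdv0 : dv ≠ 0 := by
      intro h0
      rw [h0] at hdv
      exact hv0 (ThetaW.eq_zero_of_isDiv_zero hdv)
    subst hdd
    obtain ⟨B1, Ev, hd12⟩ := ThetaW.reduce v hv dv hdv hdv0
    obtain ⟨B2, Ew, _⟩ := ThetaW.reduce w hw dv hdw hdv0
    have hq1 : bform (ThetaW.canvec dv B1) (ThetaW.canvec dv B1) = bform v v := Ev.bself
    have hq2 : bform (ThetaW.canvec dv B2) (ThetaW.canvec dv B2) = bform w w := Ew.bself
    have e1 : 2*(dv:ℤ)*B1 - 2*((dv:ℤ)-1)^2 = 2*(dv:ℤ)*B2 - 2*((dv:ℤ)-1)^2 := by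
      rw [← ThetaW.bform_canvec, ← ThetaW.bform_canvec, hq1, hq2, hq]
    have hdne : (2*(dv:ℤ)) ≠ 0 := by
      have : (dv:ℤ) ≠ 0 := Int.natCast_ne_zero.mpr hdv0
      exact mul_ne_zero two_ne_zero this
    have hBB : B1 = B2 := by
      have h2 : 2*(dv:ℤ)*B1 = 2*(dv:ℤ)*B2 := by linarith
      exact mul_left_cancel₀ hdne h2
    rw [hBB] at Ev
    exact Ev.trans Ew.symm
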